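/- Split conformal prediction has marginal coverage at least 1 − α under exchangeability: if (S_1, …, S_{n+1}) is an exchangeable random vector in ℝ^{n+1} (its joint law is invariant under every permutation of the n + 1 coordinates), α ∈ (0,1), and k = ⌈(1 − α)(n + 1)⌉ satisfies k ≤ n, then P(S_{n+1} ≤ Q̂) ≥ 1 − α, where Q̂ is the k-th smallest value among the calibration scores S_1, …, S_n. -/

import Mathlib

open Finset MeasureTheory
open scoped ENNReal

/-- The `k`-th smallest value (k-th order statistic) of a finite multiset of reals:
the `k`-th entry of the multiset sorted in nondecreasing order. -/
noncomputable def kthSmallest (m : Multiset ℝ) (k : ℕ) : ℝ :=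
  (m.sort (· ≤ ·)).getD (k - 1) 0

lemma countP_ge (l : List ℝ) (p : ℝ → Bool) (j : ℕ) (hj : j < l.length)
    (h : ∀ i (hi : i < l.length), i ≤ j → p l[i]) : j + 1 ≤ l.countP p := by
  have hsub : (l.take (j+1)).Sublist l := List.take_sublist _ _
  have hlen : (l.take (j+1)).length = j + 1 := by
    rw [List.length_take]; omega
  have : (l.take (j+1)).countP p = j + 1 := by
    rw [List.countP_eq_length.mpr, hlen]
    intro a ha
    rw [List.mem_take_iff_getElem] at ha
    obtain ⟨i, hi, rfl⟩ := ha
    exact h i (by omega) (by omega)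
  calc j + 1 = (l.take (j+1)).countP p := this.symm
    _ ≤ l.countP p := hsub.countP_le

lemma countP_le (l : List ℝ) (p : ℝ → Bool) (j : ℕ)
    (h : ∀ i (hi : i < l.length), j ≤ i → ¬ p l[i]) : l.countP p ≤ j := by
  have h2 : l.countP p = (l.take j).countP p + (l.drop j).countP p := by
    rw [← List.countP_append, List.take_append_drop]
  have h3 : (l.drop j).countP p = 0 := by
    rw [List.countP_eq_zero]
    intro a ha
    rw [List.mem_iff_getElem] at ha
    obtain ⟨i, hi, rfl⟩ := ha
    rw [List.getElem_drop]
    exact fun hp => h (j + i) (by rw [List.length_drop] at hi; omega) (by omega) hp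
  have h4 : (l.take j).countP p ≤ j := by
    calc (l.take j).countP p ≤ (l.take j).length := List.countP_le_length
      _ ≤ j := by simp [List.length_take]
  omega

lemma sorted_get_mono (l : List ℝ) (hs : l.Pairwise (· ≤ ·)) {i j : ℕ}
    (hij : i ≤ j) (hj : j < l.length) : l[i]'(lt_of_le_of_lt hij hj) ≤ l[j] := by
  have := hs.rel_get_of_le (a := ⟨i, lt_of_le_of_lt hij hj⟩) (b := ⟨j, hj⟩) hij
  simpa using this

lemma countP_sort (m : Multiset ℝ) (p : ℝ → Prop) [DecidablePred p] :
    m.countP p = (m.sort (· ≤ ·)).countP (fun y => decide (p y)) := by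
  conv_lhs => rw [← Multiset.sort_eq m (· ≤ ·)]
  exact Multiset.coe_countP p _

lemma kthSmallest_count_ge (m : Multiset ℝ) (k : ℕ) (hk1 : 1 ≤ k) (hk2 : k ≤ Multiset.card m) :
    k ≤ m.countP (fun y => y ≤ kthSmallest m k) := by
  set l := m.sort (· ≤ ·) with hl
  have hlen : l.length = Multiset.card m := Multiset.length_sort _
  have hs : l.Pairwise (· ≤ ·) := Multiset.pairwise_sort _ _
  have hkl : k - 1 < l.length := by omega
  have hq : kthSmallest m k = l[k-1] := by
    rw [kthSmallest, ← hl, List.getD_eq_getElem l 0 hkl]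
  rw [countP_sort m (fun y => y ≤ kthSmallest m k), ← hl]
  have := countP_ge l (fun y => decide (y ≤ kthSmallest m k)) (k-1) hkl
    (fun i hi hik => by simp only [decide_eq_true_eq]; rw [hq]; exact sorted_get_mono l hs hik hkl)
  omega

lemma kthSmallest_le_iff_count (m : Multiset ℝ) (k : ℕ) (hk1 : 1 ≤ k) (hk2 : k ≤ Multiset.card m)
    (x : ℝ) : x ≤ kthSmallest m k ↔ m.countP (fun y => y < x) ≤ k - 1 := by
  set l := m.sort (· ≤ ·) with hl
  have hlen : l.length = Multiset.card m := Multiset.length_sort _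
  have hs : l.Pairwise (· ≤ ·) := Multiset.pairwise_sort _ _
  have hkl : k - 1 < l.length := by omega
  have hq : kthSmallest m k = l[k-1] := by
    rw [kthSmallest, ← hl, List.getD_eq_getElem l 0 hkl]
  rw [countP_sort m (fun y => y < x), ← hl, hq]
  constructor
  · intro hx
    exact countP_le l _ (k-1) (fun i hi hik => by
      simp only [decide_eq_true_eq, not_lt]
      exact le_trans hx (sorted_get_mono l hs hik hi))
  · intro hc
    by_contra hx
    push_neg at hx
    have := countP_ge l (fun y => decide (y < x)) (k-1) hkl
      (fun i hi hik => by
        simp only [decide_eq_true_eq]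
        exact lt_of_le_of_lt (sorted_get_mono l hs hik hkl) hx)
    omega

lemma kthSmallest_cons_le (m : Multiset ℝ) (x : ℝ) (k : ℕ) (hk1 : 1 ≤ k)
    (hk2 : k ≤ Multiset.card m) (h : x ≤ kthSmallest (x ::ₘ m) k) : x ≤ kthSmallest m k := by
  rw [kthSmallest_le_iff_count _ k hk1 (by simp; omega) x] at h
  rw [kthSmallest_le_iff_count m k hk1 hk2 x]
  rw [Multiset.countP_cons] at h
  simp at h
  omega

section Main

variable {n : ℕ}

/-- full multiset of scores -/
noncomputable def fullM (f : Fin (n + 1) → ℝ) : Multiset ℝ :=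
  (Finset.univ : Finset (Fin (n + 1))).val.map f

lemma card_fullM (f : Fin (n + 1) → ℝ) : Multiset.card (fullM f) = n + 1 := by
  simp [fullM]

lemma fullM_comp_perm (f : Fin (n + 1) → ℝ) (σ : Equiv.Perm (Fin (n + 1))) :
    fullM (fun i => f (σ i)) = fullM f := by
  unfold fullM
  have : (Finset.univ : Finset (Fin (n + 1))).val.map (⇑σ) =
      (Finset.univ : Finset (Fin (n + 1))).val := by
    have h := Finset.map_univ_equiv σ
    calc (Finset.univ : Finset (Fin (n + 1))).val.map (⇑σ)
        = ((Finset.univ : Finset (Fin (n + 1))).map σ.toEmbedding).val := rfl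
      _ = (Finset.univ : Finset (Fin (n + 1))).val := by rw [h]
  calc (Finset.univ : Finset (Fin (n+1))).val.map (fun i => f (σ i))
      = ((Finset.univ : Finset (Fin (n+1))).val.map (⇑σ)).map f := by
        rw [Multiset.map_map]; rfl
    _ = (Finset.univ : Finset (Fin (n+1))).val.map f := by rw [this]

lemma fullM_eq_cons (f : Fin (n + 1) → ℝ) :
    fullM f = f (Fin.last n) ::ₘ
      ((Finset.univ : Finset (Fin n)).val.map (fun i => f (Fin.castSucc i))) := by
  unfold fullM
  conv_lhs => rw [Fin.univ_castSuccEmb]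
  rw [Finset.cons_val, Multiset.map_cons, Finset.map_val, Multiset.map_map]
  rfl

lemma countP_fullM (f : Fin (n + 1) → ℝ) (p : ℝ → Prop) [DecidablePred p] :
    (fullM f).countP p = (Finset.univ.filter (fun i => p (f i))).card := by
  rw [fullM, Multiset.countP_map]
  rfl

/-- count of strictly smaller scores -/
noncomputable def Ncnt (i : Fin (n + 1)) (f : Fin (n + 1) → ℝ) : ℕ :=
  (Finset.univ.filter (fun j => f j < f i)).card

lemma measurable_Ncnt (i : Fin (n + 1)) : Measurable (Ncnt (n := n) i) := by
  have : (Ncnt (n := n) i) = fun f => ∑ j : Fin (n + 1), if f j < f i then 1 else 0 := by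
    funext f
    rw [Ncnt, Finset.card_filter]
  rw [this]
  exact Finset.measurable_sum _ (fun j _ =>
    Measurable.ite (measurableSet_lt (measurable_pi_apply j) (measurable_pi_apply i))
      measurable_const measurable_const)

lemma Ncnt_comp_perm (i : Fin (n + 1)) (σ : Equiv.Perm (Fin (n + 1))) (f : Fin (n + 1) → ℝ) :
    Ncnt i (fun j => f (σ j)) = Ncnt (σ i) f := by
  unfold Ncnt
  apply Finset.card_bij (fun j _ => σ j)
  · intro a ha
    simp only [Finset.mem_filter, Finset.mem_univ, true_and] at ha ⊢
    exact ha
  · intro a ha b hb hab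
    exact σ.injective hab
  · intro b hb
    refine ⟨σ.symm b, ?_, by simp⟩
    simp only [Finset.mem_filter, Finset.mem_univ, true_and] at hb ⊢
    simpa using hb

lemma mem_E_iff (k : ℕ) (hk1 : 1 ≤ k) (hkn : k ≤ n + 1) (i : Fin (n + 1))
    (f : Fin (n + 1) → ℝ) :
    Ncnt i f ≤ k - 1 ↔ f i ≤ kthSmallest (fullM f) k := by
  rw [kthSmallest_le_iff_count (fullM f) k hk1 (by rw [card_fullM]; omega) (f i),
    countP_fullM]
  rfl

end Main

/-- Split conformal prediction: if `(S 0, …, S n)` is an exchangeable random vector,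
`α ∈ (0,1)`, and `k = ⌈(1-α)(n+1)⌉ ≤ n`, then the test score `S (Fin.last n)` is at
most the `k`-th smallest calibration score with probability at least `1 - α`. -/
theorem split_conformal_coverage_stmt_9
    {Ω : Type*} [MeasurableSpace Ω] (μ : Measure Ω) [IsProbabilityMeasure μ]
    (n : ℕ) (S : Ω → (Fin (n + 1) → ℝ)) (hSmeas : Measurable S)
    (hexch : ∀ σ : Equiv.Perm (Fin (n + 1)),
      Measure.map (fun ω => fun i => S ω (σ i)) μ = Measure.map S μ)
    (α : ℝ) (hα0 : 0 < α) (hα1 : α < 1)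
    (k : ℕ) (hk : k = ⌈(1 - α) * ((n : ℝ) + 1)⌉₊) (hkn : k ≤ n) :
    1 - α ≤
      (μ {ω | S ω (Fin.last n) ≤
        kthSmallest (((Finset.univ : Finset (Fin n)).val.map
          (fun i => S ω (Fin.castSucc i))) ) k}).toReal := by
  have hk1 : 1 ≤ k := by
    rw [hk]
    rw [Nat.one_le_ceil_iff]
    have h1 : (0:ℝ) < 1 - α := by linarith
    positivity
  -- the events
  set E : Fin (n + 1) → Set (Fin (n + 1) → ℝ) :=
    fun i => {f | Ncnt i f ≤ k - 1} with hE
  have hEmeas : ∀ i, MeasurableSet (E i) := by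
    intro i
    exact (measurable_Ncnt i) (measurableSet_le measurable_id measurable_const)
  set ν : Measure (Fin (n + 1) → ℝ) := Measure.map S μ with hν
  have hνprob : IsProbabilityMeasure ν := Measure.isProbabilityMeasure_map hSmeas.aemeasurable
  -- all events have the same measure
  have hsame : ∀ i, ν (E i) = ν (E (Fin.last n)) := by
    intro i
    set σ : Equiv.Perm (Fin (n + 1)) := Equiv.swap i (Fin.last n) with hσ
    have hmeasσ : Measurable (fun f : Fin (n + 1) → ℝ => fun j => f (σ j)) :=
      measurable_pi_lambda _ (fun j => measurable_pi_apply (σ j))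
    have hpre : (fun f : Fin (n + 1) → ℝ => fun j => f (σ j)) ⁻¹' (E (Fin.last n)) = E i := by
      ext f
      simp only [Set.mem_preimage, hE, Set.mem_setOf_eq]
      rw [Ncnt_comp_perm]
      have : σ (Fin.last n) = i := Equiv.swap_apply_right _ _
      rw [this]
    calc ν (E i) = ν ((fun f : Fin (n+1) → ℝ => fun j => f (σ j)) ⁻¹' (E (Fin.last n))) := by
          rw [hpre]
      _ = (Measure.map (fun f : Fin (n+1) → ℝ => fun j => f (σ j)) ν) (E (Fin.last n)) := by
          rw [Measure.map_apply hmeasσ (hEmeas _)]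
      _ = ν (E (Fin.last n)) := by
          rw [hν, Measure.map_map hmeasσ hSmeas]
          have hcomp : ((fun f : Fin (n+1) → ℝ => fun j => f (σ j)) ∘ S) =
              (fun ω => fun i => S ω (σ i)) := rfl
          rw [hcomp, hexch σ]
  -- pointwise count bound
  have hpoint : ∀ f : Fin (n + 1) → ℝ,
      (k : ℝ≥0∞) ≤ ∑ i : Fin (n + 1), (E i).indicator (fun _ => (1 : ℝ≥0∞)) f := by
    intro f
    have hcard : k ≤ (Finset.univ.filter (fun i => f ∈ E i)).card := by
      have h1 := kthSmallest_count_ge (fullM f) k hk1 (by rw [card_fullM]; omega)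
      rw [countP_fullM] at h1
      refine le_trans h1 (le_of_eq ?_)
      congr 1
      apply Finset.filter_congr
      intro i _
      simp only [hE, Set.mem_setOf_eq, eq_iff_iff]
      exact (mem_E_iff k hk1 (by omega) i f).symm
    have hsum : ∑ i : Fin (n + 1), (E i).indicator (fun _ => (1 : ℝ≥0∞)) f =
        ((Finset.univ.filter (fun i => f ∈ E i)).card : ℝ≥0∞) := by
      rw [Finset.card_filter]
      push_cast
      apply Finset.sum_congr rfl
      intro i _
      by_cases hfi : f ∈ E i <;> simp [Set.indicator, hfi]
    rw [hsum]
    exact_mod_cast Nat.cast_le.mpr hcard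
  -- integrate
  have hsumν : (k : ℝ≥0∞) ≤ ∑ i : Fin (n + 1), ν (E i) := by
    have h1 : (k : ℝ≥0∞) = ∫⁻ _, (k : ℝ≥0∞) ∂ν := by
      rw [lintegral_const, measure_univ, mul_one]
    have h2 : ∫⁻ f, (k : ℝ≥0∞) ∂ν ≤
        ∫⁻ f, ∑ i : Fin (n + 1), (E i).indicator (fun _ => (1 : ℝ≥0∞)) f ∂ν :=
      lintegral_mono hpoint
    have h3 : ∫⁻ f, ∑ i : Fin (n + 1), (E i).indicator (fun _ => (1 : ℝ≥0∞)) f ∂ν =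
        ∑ i : Fin (n + 1), ν (E i) := by
      rw [lintegral_finset_sum]
      · apply Finset.sum_congr rfl
        intro i _
        exact lintegral_indicator_one (hEmeas i)
      · intro i _
        exact (measurable_const.indicator (hEmeas i))
    rw [h1]
    rw [h3] at h2
    exact h2
  have hkey : (k : ℝ≥0∞) ≤ (n + 1) * ν (E (Fin.last n)) := by
    refine le_trans hsumν (le_of_eq ?_)
    rw [Finset.sum_congr rfl (fun i _ => hsame i), Finset.sum_const]
    simp [mul_comm]
  -- inclusion into the target event
  have hincl : S ⁻¹' (E (Fin.last n)) ⊆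
      {ω | S ω (Fin.last n) ≤
        kthSmallest (((Finset.univ : Finset (Fin n)).val.map
          (fun i => S ω (Fin.castSucc i))) ) k} := by
    intro ω hω
    simp only [Set.mem_preimage, hE, Set.mem_setOf_eq] at hω ⊢
    have h1 : S ω (Fin.last n) ≤ kthSmallest (fullM (S ω)) k :=
      (mem_E_iff k hk1 (by omega) (Fin.last n) (S ω)).mp hω
    rw [fullM_eq_cons] at h1
    exact kthSmallest_cons_le _ _ k hk1 (by simp; omega) h1
  -- measure computations
  have hν1 : ν (E (Fin.last n)) = μ (S ⁻¹' (E (Fin.last n))) :=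
    Measure.map_apply hSmeas (hEmeas _)
  have hμmono : ν (E (Fin.last n)) ≤
      μ {ω | S ω (Fin.last n) ≤
        kthSmallest (((Finset.univ : Finset (Fin n)).val.map
          (fun i => S ω (Fin.castSucc i))) ) k} := by
    rw [hν1]; exact measure_mono hincl
  -- to real numbers
  have hfin1 : ν (E (Fin.last n)) ≠ ⊤ := measure_ne_top _ _
  have hμfin : μ {ω | S ω (Fin.last n) ≤
        kthSmallest (((Finset.univ : Finset (Fin n)).val.map
          (fun i => S ω (Fin.castSucc i))) ) k} ≠ ⊤ := measure_ne_top _ _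
  have hstep1 : (ν (E (Fin.last n))).toReal ≤
      (μ {ω | S ω (Fin.last n) ≤
        kthSmallest (((Finset.univ : Finset (Fin n)).val.map
          (fun i => S ω (Fin.castSucc i))) ) k}).toReal :=
    ENNReal.toReal_mono hμfin hμmono
  have hstep2 : (k : ℝ) ≤ ((n : ℝ) + 1) * (ν (E (Fin.last n))).toReal := by
    have h1 := ENNReal.toReal_mono (by
      exact ENNReal.mul_ne_top (by simp) hfin1) hkey
    rw [ENNReal.toReal_mul] at h1
    simpa [ENNReal.toReal_add] using h1
  have hstep3 : (1 - α) * ((n : ℝ) + 1) ≤ (k : ℝ) := by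
    rw [hk]
    exact Nat.le_ceil _
  have hnpos : (0 : ℝ) < (n : ℝ) + 1 := by positivity
  have hfinal : 1 - α ≤ (ν (E (Fin.last n))).toReal := by
    have : (1 - α) * ((n : ℝ) + 1) ≤ ((n : ℝ) + 1) * (ν (E (Fin.last n))).toReal :=
      le_trans hstep3 hstep2
    nlinarith
  linarith
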